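/- Let 0<q<1. For all x>0: (a) ψ_q'(x+1) < (-q^x log q)/(1-q^x) < ψ_q'(x), and (b) ψ_q''(x) < (-q^x (log q)²)/(1-q^x)² < ψ_q''(x+1). -/

import Mathlib

open Real

/-- The q-digamma function: ψ_q(x) = -log(1-q) + (log q)·∑_{n=1}^∞ q^{nx}/(1-q^n). -/
noncomputable def qDigamma (q x : ℝ) : ℝ :=
  -Real.log (1 - q) + Real.log q * ∑' n : ℕ, q ^ (((n : ℝ) + 1) * x) / (1 - q ^ (n + 1))

/-- The q-gamma function: Γ_q(x) = (q;q)_∞/(q^x;q)_∞ · (1-q)^{1-x}. -/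
noncomputable def qGamma (q x : ℝ) : ℝ :=
  ((∏' i : ℕ, (1 - q ^ (i + 1))) / ∏' i : ℕ, (1 - q ^ (x + (i : ℝ)))) * (1 - q) ^ (1 - x)

/-- The q-bracket: [x]_q = (1-q^x)/(1-q). -/
noncomputable def qBracket (q x : ℝ) : ℝ := (1 - q ^ x) / (1 - q)

noncomputable def gTerm (q : ℝ) (n : ℕ) (y : ℝ) : ℝ :=
  q ^ (((n : ℝ) + 1) * y) / (1 - q ^ (n + 1))

lemma one_sub_pow_pos {q : ℝ} (hq0 : 0 < q) (hq1 : q < 1) (n : ℕ) :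
    (0:ℝ) < 1 - q ^ (n + 1) := by
  have h := pow_lt_one₀ hq0.le hq1 (Nat.succ_ne_zero n)
  simp only [Nat.succ_eq_add_one] at h; linarith

lemma gTerm_pos {q : ℝ} (hq0 : 0 < q) (hq1 : q < 1) (n : ℕ) (y : ℝ) : 0 < gTerm q n y :=
  div_pos (Real.rpow_pos_of_pos hq0 _) (one_sub_pow_pos hq0 hq1 n)

lemma hasDerivAt_gTerm {q : ℝ} (hq0 : 0 < q) (n : ℕ) (y : ℝ) :
    HasDerivAt (gTerm q n) ((((n : ℝ) + 1) * Real.log q) * gTerm q n y) y := by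
  have h1 : HasDerivAt (fun t : ℝ => q ^ ((((n : ℝ) + 1)) * t))
      (q ^ ((((n : ℝ) + 1)) * y) * Real.log q * (((n : ℝ) + 1) * 1)) y :=
    (Real.hasStrictDerivAt_const_rpow hq0 (((n : ℝ) + 1) * y)).hasDerivAt.comp y
      ((hasDerivAt_id y).const_mul (((n : ℝ) + 1)))
  have := h1.div_const (1 - q ^ (n + 1))
  refine this.congr_deriv ?_
  unfold gTerm
  ring

lemma gTerm_le {q : ℝ} (hq0 : 0 < q) (hq1 : q < 1) (n : ℕ) {ε y : ℝ} (hε : 0 < ε) (hy : ε ≤ y) :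
    gTerm q n y ≤ (q ^ ε) ^ (n + 1) / (1 - q) := by
  have h1 : q ^ (((n : ℝ) + 1) * y) ≤ (q ^ ε) ^ (n + 1) := by
    have h : q ^ (((n : ℝ) + 1) * y) ≤ q ^ (((n : ℝ) + 1) * ε) := by
      apply Real.rpow_le_rpow_of_exponent_ge hq0 hq1.le
      nlinarith [Nat.cast_nonneg (α := ℝ) n]
    refine h.trans_eq ?_
    rw [← Real.rpow_natCast (q ^ ε) (n + 1), ← Real.rpow_mul hq0.le]
    push_cast; ring_nf
  have h2 : 1 - q ≤ 1 - q ^ (n + 1) := by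
    have : q ^ (n + 1) ≤ q := pow_le_of_le_one hq0.le hq1.le (Nat.succ_ne_zero n)
    linarith
  have hd : (0:ℝ) < 1 - q := by linarith
  calc gTerm q n y ≤ q ^ (((n : ℝ) + 1) * y) / (1 - q) := by
        unfold gTerm
        exact div_le_div_of_nonneg_left (Real.rpow_pos_of_pos hq0 _).le hd h2
    _ ≤ (q ^ ε) ^ (n + 1) / (1 - q) := by gcongr

lemma summable_aux {r : ℝ} (hr0 : 0 ≤ r) (hr1 : r < 1) (k : ℕ) :
    Summable fun n : ℕ => ((n : ℝ) + 1) ^ k * r ^ (n + 1) := by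
  have h := summable_pow_mul_geometric_of_norm_lt_one (R := ℝ) k (r := r)
    (by rwa [Real.norm_eq_abs, abs_of_nonneg hr0])
  have h2 := (summable_nat_add_iff 1).2 h
  refine h2.congr fun n => ?_
  push_cast; ring

lemma norm_coef_gTerm {q : ℝ} (hq0 : 0 < q) (hq1 : q < 1) (k : ℕ) (n : ℕ)
    {ε y : ℝ} (hε : 0 < ε) (hy : ε ≤ y) :
    ‖(((n : ℝ) + 1) * Real.log q) ^ k * gTerm q n y‖ ≤
      |Real.log q| ^ k / (1 - q) * (((n : ℝ) + 1) ^ k * (q ^ ε) ^ (n + 1)) := by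
  have hg0 := (gTerm_pos hq0 hq1 n y).le
  have hgle := gTerm_le hq0 hq1 n hε hy
  have hn : (0:ℝ) ≤ (n : ℝ) + 1 := by positivity
  rw [norm_mul, norm_pow, norm_mul, Real.norm_eq_abs, Real.norm_eq_abs,
    abs_of_nonneg hn, Real.norm_eq_abs, abs_of_nonneg hg0]
  have h1 : (((n:ℝ) + 1) * |Real.log q|) ^ k * gTerm q n y ≤
      (((n:ℝ) + 1) * |Real.log q|) ^ k * ((q ^ ε) ^ (n + 1) / (1 - q)) := by gcongr
  calc (((n:ℝ) + 1) * |Real.log q|) ^ k * gTerm q n y ≤ _ := h1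
    _ = |Real.log q| ^ k / (1 - q) * (((n : ℝ) + 1) ^ k * (q ^ ε) ^ (n + 1)) := by
      rw [mul_pow]; ring

lemma qpow_eps {q : ℝ} (hq0 : 0 < q) (hq1 : q < 1) {ε : ℝ} (hε : 0 < ε) :
    0 ≤ q ^ ε ∧ q ^ ε < 1 :=
  ⟨(Real.rpow_pos_of_pos hq0 ε).le, Real.rpow_lt_one hq0.le hq1 hε⟩

lemma summable_coef_gTerm {q : ℝ} (hq0 : 0 < q) (hq1 : q < 1) (k : ℕ) {y : ℝ} (hy : 0 < y) :
    Summable fun n : ℕ => (((n : ℝ) + 1) * Real.log q) ^ k * gTerm q n y := by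
  obtain ⟨h0, h1⟩ := qpow_eps hq0 hq1 (half_pos hy)
  refine Summable.of_norm_bounded (((summable_aux h0 h1 k).mul_left
    (|Real.log q| ^ k / (1 - q)))) fun n => ?_
  exact norm_coef_gTerm hq0 hq1 k n (half_pos hy) (half_le_self hy.le)

lemma hasDerivAt_tsum_gTerm {q : ℝ} (hq0 : 0 < q) (hq1 : q < 1) (k : ℕ) {y : ℝ} (hy : 0 < y) :
    HasDerivAt (fun t => ∑' n : ℕ, (((n : ℝ) + 1) * Real.log q) ^ k * gTerm q n t)
      (∑' n : ℕ, (((n : ℝ) + 1) * Real.log q) ^ (k + 1) * gTerm q n y) y := by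
  obtain ⟨h0, h1⟩ := qpow_eps hq0 hq1 (half_pos hy)
  have hu : Summable (fun n : ℕ => |Real.log q| ^ (k+1) / (1 - q) *
      (((n : ℝ) + 1) ^ (k+1) * (q ^ (y/2)) ^ (n + 1))) :=
    (summable_aux h0 h1 (k+1)).mul_left _
  have hg : ∀ (n : ℕ) (z : ℝ), z ∈ Set.Ioi (y/2) →
      HasDerivAt (fun t => (((n : ℝ) + 1) * Real.log q) ^ k * gTerm q n t)
        ((((n : ℝ) + 1) * Real.log q) ^ (k + 1) * gTerm q n z) z := by
    intro n z _
    have := (hasDerivAt_gTerm hq0 n z).const_mul ((((n : ℝ) + 1) * Real.log q) ^ k)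
    refine this.congr_deriv ?_
    ring
  have hg' : ∀ (n : ℕ) (z : ℝ), z ∈ Set.Ioi (y/2) →
      ‖(((n : ℝ) + 1) * Real.log q) ^ (k + 1) * gTerm q n z‖ ≤
        |Real.log q| ^ (k+1) / (1 - q) * (((n : ℝ) + 1) ^ (k+1) * (q ^ (y/2)) ^ (n + 1)) :=
    fun n z hz => norm_coef_gTerm hq0 hq1 (k+1) n (half_pos hy) (le_of_lt hz)
  exact hasDerivAt_tsum_of_isPreconnected hu isOpen_Ioi isPreconnected_Ioi hg hg'
    (half_lt_self hy) (summable_coef_gTerm hq0 hq1 k hy) (half_lt_self hy)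

lemma key1 {t : ℝ} (ht0 : 0 < t) (ht1 : t < 1) : 1 - t < -Real.log t := by
  have := Real.log_lt_sub_one_of_pos ht0 (ne_of_lt ht1)
  linarith

lemma key2 {t : ℝ} (ht0 : 0 < t) (ht1 : t < 1) : -(t * Real.log t) < 1 - t := by
  have h1t : (1:ℝ) < 1/t := by rw [lt_div_iff₀ ht0]; linarith
  have h := Real.log_lt_sub_one_of_pos (show (0:ℝ) < 1/t by positivity) (by linarith)
  rw [Real.log_div one_ne_zero (ne_of_gt ht0), Real.log_one] at h
  have h2 := mul_lt_mul_of_pos_left h ht0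
  have h3 : t * (1/t - 1) = 1 - t := by field_simp
  nlinarith

lemma geom1 {t : ℝ} (ht0 : 0 ≤ t) (ht1 : t < 1) :
    ∑' n : ℕ, t ^ (n + 1) = t / (1 - t) := by
  have h : (fun n : ℕ => t ^ (n + 1)) = fun n : ℕ => t * t ^ n := by
    funext n; rw [pow_succ]; ring
  rw [h, tsum_mul_left, tsum_geometric_of_lt_one ht0 ht1, div_eq_mul_inv]

lemma summable_geom1 {t : ℝ} (ht0 : 0 ≤ t) (ht1 : t < 1) :
    Summable fun n : ℕ => t ^ (n + 1) := by
  have := (summable_geometric_of_lt_one ht0 ht1).mul_left t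
  refine this.congr fun n => ?_
  rw [pow_succ]; ring

lemma geom2 {t : ℝ} (ht0 : 0 ≤ t) (ht1 : t < 1) :
    ∑' n : ℕ, ((n : ℝ) + 1) * t ^ (n + 1) = t / (1 - t) ^ 2 := by
  have hn : ‖t‖ < 1 := by rwa [Real.norm_eq_abs, abs_of_nonneg ht0]
  have hsum : Summable fun n : ℕ => (n : ℝ) * t ^ n := by
    have := summable_pow_mul_geometric_of_norm_lt_one (R := ℝ) 1 hn
    refine this.congr fun n => by ring_nf
  have h0 := Summable.tsum_eq_zero_add hsum
  rw [Nat.cast_zero, zero_mul, zero_add] at h0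
  have := tsum_coe_mul_geometric_of_norm_lt_one hn
  rw [this] at h0
  rw [h0]
  apply tsum_congr; intro n; push_cast; ring

lemma summable_geom2 {t : ℝ} (ht0 : 0 ≤ t) (ht1 : t < 1) :
    Summable fun n : ℕ => ((n : ℝ) + 1) * t ^ (n + 1) := by
  have := summable_aux ht0 ht1 1
  refine this.congr fun n => by ring_nf

set_option maxHeartbeats 1000000 in
/-- bounds relating ψ_q', ψ_q'' at x and x+1. -/
theorem qDigamma_deriv_bounds (q : ℝ) (hq0 : 0 < q) (hq1 : q < 1)
    (x : ℝ) (hx : 0 < x) :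
    (deriv (qDigamma q) (x + 1) < -q ^ x * Real.log q / (1 - q ^ x) ∧
     -q ^ x * Real.log q / (1 - q ^ x) < deriv (qDigamma q) x) ∧
    (iteratedDeriv 2 (qDigamma q) x < -q ^ x * (Real.log q) ^ 2 / (1 - q ^ x) ^ 2 ∧
     -q ^ x * (Real.log q) ^ 2 / (1 - q ^ x) ^ 2 < iteratedDeriv 2 (qDigamma q) (x + 1)) := by
  set L := Real.log q with hLdef
  have hL : L < 0 := Real.log_neg hq0 hq1
  have ht0 : 0 < q ^ x := Real.rpow_pos_of_pos hq0 x
  have ht1 : q ^ x < 1 := Real.rpow_lt_one hq0.le hq1 hx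
  -- the qDigamma function in terms of gTerm
  have hfun : qDigamma q = fun y => -Real.log (1 - q) + L * ∑' n : ℕ, gTerm q n y := by
    funext y
    simp only [qDigamma, gTerm, hLdef]
  -- first derivative
  have hD : ∀ y : ℝ, 0 < y → HasDerivAt (qDigamma q)
      (L * ∑' n : ℕ, (((n : ℝ) + 1) * L) ^ 1 * gTerm q n y) y := by
    intro y hy
    have h := hasDerivAt_tsum_gTerm hq0 hq1 0 hy
    simp only [pow_zero, one_mul, zero_add] at h
    rw [hfun]
    exact (h.const_mul L).const_add _
  -- second derivative function
  have hD2 : ∀ y : ℝ, 0 < y → HasDerivAt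
      (fun z => L * ∑' n : ℕ, (((n : ℝ) + 1) * L) ^ 1 * gTerm q n z)
      (L * ∑' n : ℕ, (((n : ℝ) + 1) * L) ^ 2 * gTerm q n y) y := by
    intro y hy
    exact (hasDerivAt_tsum_gTerm hq0 hq1 1 hy).const_mul L
  have hderiv : ∀ y : ℝ, 0 < y →
      deriv (qDigamma q) y = L * ∑' n : ℕ, (((n : ℝ) + 1) * L) ^ 1 * gTerm q n y :=
    fun y hy => (hD y hy).deriv
  have hiter : ∀ y : ℝ, 0 < y →
      iteratedDeriv 2 (qDigamma q) y = L * ∑' n : ℕ, (((n : ℝ) + 1) * L) ^ 2 * gTerm q n y := by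
    intro y hy
    have hev : deriv (qDigamma q) =ᶠ[nhds y]
        (fun z => L * ∑' n : ℕ, (((n : ℝ) + 1) * L) ^ 1 * gTerm q n z) := by
      filter_upwards [Ioi_mem_nhds hy] with z hz
      exact hderiv z hz
    rw [show (2:ℕ) = 1 + 1 from rfl, iteratedDeriv_succ, iteratedDeriv_one]
    rw [hev.deriv_eq]
    exact (hD2 y hy).deriv
  -- middle quantities as sums
  have hM1 : -q ^ x * L / (1 - q ^ x) = ∑' n : ℕ, (-L) * (q ^ x) ^ (n + 1) := by
    rw [tsum_mul_left, geom1 ht0.le ht1]; ring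
  have hM2 : -q ^ x * L ^ 2 / (1 - q ^ x) ^ 2
      = ∑' n : ℕ, (-(L ^ 2)) * (((n : ℝ) + 1) * (q ^ x) ^ (n + 1)) := by
    rw [tsum_mul_left, geom2 ht0.le ht1]; ring
  -- pull constants into the series
  have hpull1 : ∀ y : ℝ, L * ∑' n : ℕ, (((n : ℝ) + 1) * L) ^ 1 * gTerm q n y
      = ∑' n : ℕ, L * ((((n : ℝ) + 1) * L) ^ 1 * gTerm q n y) := fun y => (tsum_mul_left).symm
  have hpull2 : ∀ y : ℝ, L * ∑' n : ℕ, (((n : ℝ) + 1) * L) ^ 2 * gTerm q n y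
      = ∑' n : ℕ, L * ((((n : ℝ) + 1) * L) ^ 2 * gTerm q n y) := fun y => (tsum_mul_left).symm
  -- basic facts per n
  have hx1 : (0:ℝ) < x + 1 := by linarith
  have hfacts : ∀ n : ℕ,
      (q ^ x) ^ (n + 1) = q ^ (((n : ℝ) + 1) * x) ∧
      q ^ (((n : ℝ) + 1) * (x + 1)) = q ^ (((n : ℝ) + 1) * x) * q ^ (n + 1) := by
    intro n
    constructor
    · rw [← Real.rpow_natCast (q ^ x) (n + 1), ← Real.rpow_mul hq0.le]
      push_cast; ring_nf
    · have he : ((n:ℝ) + 1) * (x + 1) = ((n:ℝ) + 1) * x + ((n + 1 : ℕ) : ℝ) := by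
        push_cast; ring
      rw [he, Real.rpow_add hq0, Real.rpow_natCast]
  have hkey : ∀ n : ℕ,
      (1 - q ^ (n + 1) < -(((n:ℝ) + 1) * L)) ∧
      (-((((n:ℝ) + 1) * L) * q ^ (n + 1)) < 1 - q ^ (n + 1)) := by
    intro n
    have htn0 : (0:ℝ) < q ^ (n + 1) := pow_pos hq0 _
    have htn1 : q ^ (n + 1) < 1 := by
      have := one_sub_pow_pos hq0 hq1 n; linarith
    have hlog : Real.log (q ^ (n + 1)) = ((n:ℝ) + 1) * L := by
      rw [Real.log_pow]; push_cast; ring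
    constructor
    · have := key1 htn0 htn1; rw [hlog] at this; linarith
    · have := key2 htn0 htn1; rw [hlog] at this; nlinarith
  -- summabilities
  have hsumg1x : Summable fun n : ℕ => L * ((((n : ℝ) + 1) * L) ^ 1 * gTerm q n x) :=
    (summable_coef_gTerm hq0 hq1 1 hx).mul_left L
  have hsumg1x1 : Summable fun n : ℕ => L * ((((n : ℝ) + 1) * L) ^ 1 * gTerm q n (x+1)) :=
    (summable_coef_gTerm hq0 hq1 1 hx1).mul_left L
  have hsumg2x : Summable fun n : ℕ => L * ((((n : ℝ) + 1) * L) ^ 2 * gTerm q n x) :=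
    (summable_coef_gTerm hq0 hq1 2 hx).mul_left L
  have hsumg2x1 : Summable fun n : ℕ => L * ((((n : ℝ) + 1) * L) ^ 2 * gTerm q n (x+1)) :=
    (summable_coef_gTerm hq0 hq1 2 hx1).mul_left L
  have hsumM1 : Summable fun n : ℕ => (-L) * (q ^ x) ^ (n + 1) :=
    (summable_geom1 ht0.le ht1).mul_left _
  have hsumM2 : Summable fun n : ℕ => (-(L ^ 2)) * (((n : ℝ) + 1) * (q ^ x) ^ (n + 1)) :=
    (summable_geom2 ht0.le ht1).mul_left _
  -- termwise strict inequalities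
  have hT : ∀ n : ℕ,
      (L * ((((n : ℝ) + 1) * L) ^ 1 * gTerm q n (x+1)) < (-L) * (q ^ x) ^ (n + 1)) ∧
      ((-L) * (q ^ x) ^ (n + 1) < L * ((((n : ℝ) + 1) * L) ^ 1 * gTerm q n x)) ∧
      (L * ((((n : ℝ) + 1) * L) ^ 2 * gTerm q n x)
        < (-(L ^ 2)) * (((n : ℝ) + 1) * (q ^ x) ^ (n + 1))) ∧
      ((-(L ^ 2)) * (((n : ℝ) + 1) * (q ^ x) ^ (n + 1))
        < L * ((((n : ℝ) + 1) * L) ^ 2 * gTerm q n (x+1))) := by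
    intro n
    obtain ⟨hI1, hI2⟩ := hfacts n
    obtain ⟨hk1, hk2⟩ := hkey n
    have hden : (0:ℝ) < 1 - q ^ (n + 1) := one_sub_pow_pos hq0 hq1 n
    have htn0 : (0:ℝ) < q ^ (n + 1) := pow_pos hq0 _
    have hQn : (0:ℝ) < q ^ (((n : ℝ) + 1) * x) := Real.rpow_pos_of_pos hq0 _
    have hc : (0:ℝ) < (n:ℝ) + 1 := by positivity
    have hL2 : (0:ℝ) < L ^ 2 := by nlinarith
    set c := (n:ℝ) + 1
    set Qn := q ^ (c * x) with hQdef
    set tn := q ^ (n + 1)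
    unfold gTerm
    rw [hI1, hI2]
    have e1 : L * ((c * L) ^ 1 * (Qn * tn / (1 - tn))) = L ^ 2 * c * Qn * tn / (1 - tn) := by
      ring
    have e2 : L * ((c * L) ^ 1 * (Qn / (1 - tn))) = L ^ 2 * c * Qn / (1 - tn) := by ring
    have e3 : L * ((c * L) ^ 2 * (Qn / (1 - tn))) = L ^ 3 * c ^ 2 * Qn / (1 - tn) := by ring
    have e4 : L * ((c * L) ^ 2 * (Qn * tn / (1 - tn))) = L ^ 3 * c ^ 2 * Qn * tn / (1 - tn) := by
      ring
    rw [e1, e2, e3, e4]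
    have hposA : (0:ℝ) < -L * Qn := by nlinarith
    have hposB : (0:ℝ) < L ^ 2 * c * Qn := by positivity
    refine ⟨?_, ?_, ?_, ?_⟩
    · rw [div_lt_iff₀ hden]
      nlinarith [mul_lt_mul_of_pos_left hk2 hposA]
    · rw [lt_div_iff₀ hden]
      nlinarith [mul_lt_mul_of_pos_left hk1 hposA]
    · rw [div_lt_iff₀ hden]
      nlinarith [mul_lt_mul_of_pos_left hk1 hposB]
    · rw [lt_div_iff₀ hden]
      nlinarith [mul_lt_mul_of_pos_left hk2 hposB]
  refine ⟨⟨?_, ?_⟩, ?_, ?_⟩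
  · rw [hderiv (x+1) hx1, hM1, hpull1]
    exact Summable.tsum_lt_tsum (fun n => ((hT n).1).le) (hT 0).1 hsumg1x1 hsumM1
  · rw [hderiv x hx, hM1, hpull1]
    exact Summable.tsum_lt_tsum (fun n => ((hT n).2.1).le) (hT 0).2.1 hsumM1 hsumg1x
  · rw [hiter x hx, hM2, hpull2]
    exact Summable.tsum_lt_tsum (fun n => ((hT n).2.2.1).le) (hT 0).2.2.1 hsumg2x hsumM2
  · rw [hiter (x+1) hx1, hM2, hpull2]
    exact Summable.tsum_lt_tsum (fun n => ((hT n).2.2.2).le) (hT 0).2.2.2 hsumM2 hsumg2x1
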